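/- For x tending to infinity, the limit of Γ(x/2 + 1)/Γ(x/2) − (Γ((x+1)/2)/Γ(x/2))² equals 1/4. -/

import Mathlib

open Real Filter Topology

noncomputable def rr (s : ℝ) : ℝ := Real.Gamma (s + 1/2) / Real.Gamma s

noncomputable def hh (s : ℝ) : ℝ := rr s ^ 2 - s + 1/4

lemma rr_pos {s : ℝ} (hs : 0 < s) : 0 < rr s :=
  div_pos (Real.Gamma_pos_of_pos (by linarith)) (Real.Gamma_pos_of_pos hs)

lemma wendel {s : ℝ} (hs : 0 < s) : rr s ^ 2 ≤ s := by
  have h := Real.Gamma_mul_add_mul_le_rpow_Gamma_mul_rpow_Gamma hs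
    (show (0:ℝ) < s + 1 by linarith) one_half_pos one_half_pos
    (show (1:ℝ)/2 + 1/2 = 1 by norm_num)
  have e : (1/2 : ℝ) * s + (1/2) * (s+1) = s + 1/2 := by ring
  rw [e] at h
  have hgs := Real.Gamma_pos_of_pos hs
  have hgs1 := Real.Gamma_pos_of_pos (show (0:ℝ) < s + 1 by linarith)
  have hsq : Real.Gamma (s + 1/2) ^ 2 ≤ Real.Gamma s * Real.Gamma (s+1) := by
    have h2 : (Real.Gamma s ^ ((1:ℝ)/2) * Real.Gamma (s+1) ^ ((1:ℝ)/2)) ^ 2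
        = Real.Gamma s * Real.Gamma (s+1) := by
      rw [mul_pow, ← Real.rpow_natCast (Real.Gamma s ^ ((1:ℝ)/2)) 2,
        ← Real.rpow_natCast (Real.Gamma (s+1) ^ ((1:ℝ)/2)) 2,
        ← Real.rpow_mul hgs.le, ← Real.rpow_mul hgs1.le]
      norm_num
    have hpos : (0:ℝ) < Real.Gamma (s + 1/2) := Real.Gamma_pos_of_pos (by linarith)
    calc Real.Gamma (s + 1/2) ^ 2
        ≤ (Real.Gamma s ^ ((1:ℝ)/2) * Real.Gamma (s+1) ^ ((1:ℝ)/2)) ^ 2 := by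
          apply pow_le_pow_left₀ hpos.le h
      _ = Real.Gamma s * Real.Gamma (s+1) := h2
  rw [Real.Gamma_add_one hs.ne'] at hsq
  rw [rr, div_pow, div_le_iff₀ (by positivity)]
  nlinarith [hsq]

lemma rr_mul {s : ℝ} (hs : 0 < s) : rr s * rr (s + 1/2) = s := by
  have h1 : Real.Gamma (s + 1/2) ≠ 0 := (Real.Gamma_pos_of_pos (by linarith)).ne'
  have h2 : Real.Gamma s ≠ 0 := (Real.Gamma_pos_of_pos hs).ne'
  have e : s + 1/2 + 1/2 = s + 1 := by ring
  rw [rr, rr, e, Real.Gamma_add_one hs.ne', div_mul_div_comm,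
    div_eq_iff (by exact mul_ne_zero h2 h1)]
  ring

lemma keyK {s : ℝ} (hs : 0 < s) :
    (s - 1/4 + hh s) * (s + 1/4 + hh (s + 1/2)) = s ^ 2 := by
  have e1 : s - 1/4 + hh s = rr s ^ 2 := by rw [hh]; ring
  have e2 : s + 1/4 + hh (s + 1/2) = rr (s + 1/2) ^ 2 := by rw [hh]; ring
  rw [e1, e2, ← mul_pow, rr_mul hs]

lemma hhA_pos {s : ℝ} (hs : 0 < s) : 0 < s - 1/4 + hh s := by
  have : s - 1/4 + hh s = rr s ^ 2 := by rw [hh]; ring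
  rw [this]; exact pow_pos (rr_pos hs) 2

lemma base_lower {s : ℝ} (hs : 0 < s) : -(1/4) ≤ hh s := by
  have hK := keyK hs
  have hA := hhA_pos hs
  have hB : 0 < s + 1/4 + hh (s + 1/2) := by
    have := hhA_pos (show (0:ℝ) < s + 1/2 by linarith)
    linarith [this]
  have hW : s + 1/4 + hh (s + 1/2) ≤ s + 1/2 := by
    have e2 : s + 1/4 + hh (s + 1/2) = rr (s + 1/2) ^ 2 := by rw [hh]; ring
    rw [e2]
    have := wendel (show (0:ℝ) < s + 1/2 by linarith)
    linarith
  nlinarith [hK, hA, hB, hW]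

lemma base_upper {s : ℝ} (hs : 0 < s) : hh s ≤ 1/4 := by
  have := wendel hs
  rw [hh]; linarith

set_option maxHeartbeats 1600000 in
lemma step {s δ : ℝ} (hs : 1 ≤ s) (hδ : 0 < δ) (hδ4 : δ ≤ 1/4)
    (hB1 : -δ ≤ hh (s + 1/2)) (hB2 : hh (s + 1/2) ≤ 1/(16*(s + 1/2)) + δ) :
    -(δ * Real.sqrt (s/(s + 1/2))) ≤ hh s ∧
      hh s ≤ 1/(16*s) + δ * Real.sqrt (s/(s + 1/2)) := by
  have hs0 : (0:ℝ) < s := by linarith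
  set u := Real.sqrt (s/(s + 1/2)) with hu_def
  have hu0 : 0 < u := Real.sqrt_pos.mpr (by positivity)
  have hu2 : u^2 * (s + 1/2) = s := by
    rw [Real.sq_sqrt (by positivity)]; field_simp
  have hu1 : u ≤ 1 := Real.sqrt_le_one.mpr (by rw [div_le_one (by positivity)]; linarith)
  have hsq : ((s + 1/4)*u)^2 * (s + 1/2) = (s + 1/4)^2 * s := by
    linear_combination (s + 1/4)^2 * hu2
  have h1 : s^2 ≤ ((s + 1/4)*u)^2 := by nlinarith [hsq, hs0, hs]
  have hsu : s ≤ (s + 1/4) * u := by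
    nlinarith [h1, hu0, hs0, mul_pos (show (0:ℝ) < s + 1/4 by linarith) hu0]
  have hdu : δ * u ≤ 1/4 := by
    have := mul_le_of_le_one_right hδ.le hu1
    linarith
  set A := hh s with hA_def
  set B := hh (s + 1/2) with hB_def
  have hK := keyK hs0
  have hBpos : 0 < s + 1/4 + B := by
    have := hhA_pos (show (0:ℝ) < s + 1/2 by linarith)
    rw [hB_def]; linarith [this]
  have w1 : A * (s + 1/4 + B) = 1/16 - (s - 1/4) * B := by nlinarith [hK]
  constructor
  · -- lower bound
    have hq0 : (0:ℝ) < 1/(16*(s + 1/2)) := by positivity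
    have hq2 : (s - 1/4) * (1/(16*(s + 1/2))) ≤ 1/16 := by
      have hmm : (s - 1/4) * (1/(16*(s + 1/2))) ≤ (s + 1/2) * (1/(16*(s + 1/2))) :=
        mul_le_mul_of_nonneg_right (by linarith) hq0.le
      have hne : s + 1/2 ≠ 0 := by positivity
      have e : (s + 1/2) * (1/(16*(s + 1/2))) = 1/16 := by field_simp
      linarith
    have hE2 : 0 ≤ 1/16 + (1/(16*(s + 1/2)) + δ)*(δ*u - (s - 1/4)) + δ*u*(s + 1/4) := by
      nlinarith [hq2, hq0, hsu, hdu, hδ, hu0, hδ4,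
        mul_nonneg hq0.le (mul_nonneg hδ.le hu0.le),
        mul_nonneg hδ.le (mul_nonneg hδ.le hu0.le),
        mul_nonneg hδ.le (by linarith : (0:ℝ) ≤ (s + 1/4)*u - (s - 1/4))]
    have hcoef : δ*u - (s - 1/4) ≤ 0 := by linarith
    have hmul := mul_le_mul_of_nonpos_right hB2 hcoef
    have hEB : 0 ≤ 1/16 + B*(δ*u - (s - 1/4)) + δ*u*(s + 1/4) := by
      linarith [hE2, hmul]
    have hE : 0 ≤ (A + δ*u) * (s + 1/4 + B) := by nlinarith [w1, hEB]
    nlinarith [hE, hBpos]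
  · -- upper bound
    have hq's : (1/(16*s)) * s = 1/16 := by field_simp
    have hq'0 : (0:ℝ) < 1/(16*s) := by positivity
    have hworst : (1/(16*s) + δ*u) * (s + 1/4 - δ) ≥ 1/16 + (s - 1/4)*δ := by
      nlinarith [hq's, hsu, hdu, hδ, hδ4, hu0, hu1, hq'0,
        mul_nonneg hq'0.le (by linarith : (0:ℝ) ≤ 1/4 - δ),
        mul_nonneg hδ.le (by linarith : (0:ℝ) ≤ 1/4 - δ*u),
        mul_nonneg hδ.le (by linarith : (0:ℝ) ≤ (s + 1/4)*u - s)]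
    have hge : (1/(16*s) + δ*u) * (s + 1/4 + B) ≥ 1/16 - (s - 1/4)*B := by
      nlinarith [hworst, hB1, hδ, hu0, hq'0,
        mul_nonneg (by linarith : (0:ℝ) ≤ B + δ)
          (by positivity : (0:ℝ) ≤ 1/(16*s) + δ*u),
        mul_nonneg (by linarith : (0:ℝ) ≤ B + δ) (by linarith : (0:ℝ) ≤ s - 1/4)]
    nlinarith [hge, w1, hBpos]

noncomputable def dd (n : ℕ) (s : ℝ) : ℝ := Real.sqrt (s/(s + n/2)) / 4

lemma main_bound : ∀ n : ℕ, ∀ s : ℝ, 1 ≤ s →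
    -(dd n s) ≤ hh s ∧ hh s ≤ 1/(16*s) + dd n s := by
  intro n
  induction n with
  | zero =>
    intro s hs
    have hs0 : (0:ℝ) < s := by linarith
    have hd : dd 0 s = 1/4 := by
      rw [dd]
      norm_num [div_self hs0.ne']
    rw [hd]
    constructor
    · exact base_lower hs0
    · have h1 := base_upper hs0
      have h2 : (0:ℝ) < 1/(16*s) := by positivity
      linarith
  | succ n ih =>
    intro s hs
    have hs0 : (0:ℝ) < s := by linarith
    have ht : (1:ℝ) ≤ s + 1/2 := by linarith
    have hn0 : (0:ℝ) ≤ (n:ℝ) := Nat.cast_nonneg n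
    have hδ0 : 0 < dd n (s + 1/2) := by
      rw [dd]
      have : 0 < Real.sqrt ((s + 1/2)/(s + 1/2 + n/2)) :=
        Real.sqrt_pos.mpr (by positivity)
      linarith
    have hδ4 : dd n (s + 1/2) ≤ 1/4 := by
      rw [dd]
      have h1 : Real.sqrt ((s + 1/2)/(s + 1/2 + n/2)) ≤ 1 :=
        Real.sqrt_le_one.mpr (by rw [div_le_one (by positivity)]; linarith)
      linarith
    obtain ⟨h1, h2⟩ := ih (s + 1/2) ht
    obtain ⟨l, r⟩ := step hs hδ0 hδ4 h1 h2
    have hde : dd n (s + 1/2) * Real.sqrt (s/(s + 1/2)) = dd (n+1) s := by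
      rw [dd, dd, div_mul_eq_mul_div, ← Real.sqrt_mul (by positivity)]
      congr 2
      push_cast
      have e1 : s + 1/2 ≠ 0 := by positivity
      have e2 : s + 1/2 + (n:ℝ)/2 ≠ 0 := by positivity
      have e3 : s + ((n:ℝ)+1)/2 ≠ 0 := by positivity
      field_simp
      ring
    exact ⟨by rw [← hde]; exact l, by rw [← hde]; exact r⟩

lemma hh_bounds {s : ℝ} (hs : 1 ≤ s) : 0 ≤ hh s ∧ hh s ≤ 1/(16*s) := by
  have hs0 : (0:ℝ) < s := by linarith
  have hd : Tendsto (fun n : ℕ => dd n s) atTop (𝓝 0) := by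
    have h1 : Tendsto (fun n : ℕ => s + (n:ℝ)/2) atTop atTop :=
      tendsto_atTop_add_const_left _ s
        ((tendsto_natCast_atTop_atTop (R := ℝ)).atTop_div_const (by norm_num))
    have h2 : Tendsto (fun n : ℕ => s / (s + (n:ℝ)/2)) atTop (𝓝 0) :=
      Tendsto.div_atTop tendsto_const_nhds h1
    have h3 : Tendsto (fun n : ℕ => Real.sqrt (s / (s + (n:ℝ)/2))) atTop (𝓝 0) := by
      have := (Real.continuous_sqrt.tendsto 0).comp h2
      rw [Real.sqrt_zero] at this
      exact this
    have h4 := h3.div_const 4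
    rw [zero_div] at h4
    exact h4.congr (fun n => by rw [dd])
  constructor
  · have hneg : Tendsto (fun n : ℕ => -(dd n s)) atTop (𝓝 0) := by
      have := hd.neg; rwa [neg_zero] at this
    exact le_of_tendsto' hneg (fun n => (main_bound n s hs).1)
  · have hpl : Tendsto (fun n : ℕ => 1/(16*s) + dd n s) atTop (𝓝 (1/(16*s))) := by
      have := (tendsto_const_nhds : Tendsto (fun _ : ℕ => 1/(16*s)) atTop (𝓝 (1/(16*s)))).add hd
      rwa [add_zero] at this
    exact ge_of_tendsto' hpl (fun n => (main_bound n s hs).2)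

theorem gamma_ratio_diff_tendsto_quarter :
    Tendsto (fun x : ℝ =>
        Real.Gamma (x / 2 + 1) / Real.Gamma (x / 2)
          - (Real.Gamma ((x + 1) / 2) / Real.Gamma (x / 2)) ^ 2)
      atTop (nhds (1 / 4)) := by
  have h0 : Tendsto (fun x : ℝ => hh (x/2)) atTop (𝓝 0) := by
    apply tendsto_of_tendsto_of_tendsto_of_le_of_le'
      (g := fun _ : ℝ => (0:ℝ)) (h := fun x : ℝ => 1/(8*x))
    · exact tendsto_const_nhds
    · exact Tendsto.div_atTop tendsto_const_nhds
        (tendsto_id.const_mul_atTop (by norm_num : (0:ℝ) < 8))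
    · filter_upwards [eventually_ge_atTop (2:ℝ)] with x hx
      exact (hh_bounds (by linarith : (1:ℝ) ≤ x/2)).1
    · filter_upwards [eventually_ge_atTop (2:ℝ)] with x hx
      have h := (hh_bounds (by linarith : (1:ℝ) ≤ x/2)).2
      have e : 1/(16*(x/2)) = 1/(8*x) := by ring_nf
      linarith [h, e.le, e.ge]
  have h1 : Tendsto (fun x : ℝ => 1/4 - hh (x/2)) atTop (𝓝 (1/4)) := by
    have := (tendsto_const_nhds (α := ℝ) (x := (1/4:ℝ)) (f := atTop)).sub h0
    rwa [sub_zero] at this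
  apply h1.congr'
  filter_upwards [eventually_gt_atTop (0:ℝ)] with x hx
  have hx2 : 0 < x/2 := by linarith
  have hne : Real.Gamma (x/2) ≠ 0 := (Real.Gamma_pos_of_pos hx2).ne'
  have e1 : Real.Gamma (x/2 + 1) / Real.Gamma (x/2) = x/2 := by
    rw [Real.Gamma_add_one hx2.ne', mul_div_assoc, div_self hne, mul_one]
  have e2 : (x + 1)/2 = x/2 + 1/2 := by ring
  rw [hh, rr, e1, e2]
  ring
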